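/- Let n ≥ 2 and let 0 ≤ k ≤ n − 1. Let (S_i)_{i ∈ I} be a finite family of at least n − k spheres of codimension one in ℝⁿ, i.e. S_i = {y : ‖y − c_i‖ = r_i} with r_i > 0. Suppose that for every subset J ⊆ I with card J = n − k, the intersection ⋂_{j ∈ J} S_j is a sphere of dimension at least k + 1. Then the intersection ⋂_{i ∈ I} S_i is a sphere of dimension at least k + 1. -/

import Mathlib

noncomputable section

/-- `B[X]`: the intersection of all closed unit balls centered at points of `X`
(`Set.univ` when `X = ∅`). -/
def ballInter {n : ℕ} (X : Set (EuclideanSpace ℝ (Fin n))) :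
    Set (EuclideanSpace ℝ (Fin n)) :=
  ⋂ x ∈ X, Metric.closedBall x 1

/-- The closed spindle `[a,b]_s`: `B[B[{a,b}]]` if `dist a b ≤ 2`, all of the space
otherwise. -/
def spindle {n : ℕ} (a b : EuclideanSpace ℝ (Fin n)) :
    Set (EuclideanSpace ℝ (Fin n)) :=
  if dist a b ≤ 2 then ballInter (ballInter {a, b}) else Set.univ

/-- A set is spindle convex if it contains the closed spindle of any two of its points. -/
def SpindleConvex {n : ℕ} (C : Set (EuclideanSpace ℝ (Fin n))) : Prop :=
  ∀ a ∈ C, ∀ b ∈ C, spindle a b ⊆ C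

/-- The spindle convex hull: the intersection of all spindle convex sets containing `X`. -/
def spindleHull {n : ℕ} (X : Set (EuclideanSpace ℝ (Fin n))) :
    Set (EuclideanSpace ℝ (Fin n)) :=
  ⋂₀ {C : Set (EuclideanSpace ℝ (Fin n)) | X ⊆ C ∧ SpindleConvex C}

/-- Arc-distance `ρ(a,b) = 2 · arcsin(‖a - b‖ / 2)`. -/
def arcDist {n : ℕ} (a b : EuclideanSpace ℝ (Fin n)) : ℝ :=
  2 * Real.arcsin (dist a b / 2)

/-- `S` is a sphere of dimension at least `d`: the intersection of a sphere of
positive radius with an affine subspace through its center of dimension at least `d + 1`. -/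
def IsSphereOfDimGE {n : ℕ} (d : ℕ) (S : Set (EuclideanSpace ℝ (Fin n))) : Prop :=
  ∃ (c : EuclideanSpace ℝ (Fin n)) (r : ℝ) (V : AffineSubspace ℝ (EuclideanSpace ℝ (Fin n))),
    0 < r ∧ c ∈ V ∧ d + 1 ≤ Module.finrank ℝ V.direction ∧
    S = (V : Set (EuclideanSpace ℝ (Fin n))) ∩ Metric.sphere c r

open Module
open scoped RealInnerProductSpace

section helpers

variable {n : ℕ}

local notation "E" => EuclideanSpace ℝ (Fin n)

private lemma sphere_expand {x c : E} {r : ℝ} (h : dist x c = r) :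
    ‖x‖ ^ 2 - 2 * ⟪x, c⟫ + ‖c‖ ^ 2 = r ^ 2 := by
  rw [← h, dist_eq_norm]
  exact (norm_sub_sq_real x c).symm

private lemma ortho_of_subset_sphere {c₀ : E} {r₀ : ℝ} (hr₀ : 0 < r₀)
    {V : AffineSubspace ℝ E} (hc₀ : c₀ ∈ V) {a : E} {ra : ℝ}
    (hsub : (V : Set E) ∩ Metric.sphere c₀ r₀ ⊆ Metric.sphere a ra) :
    ∀ v ∈ V.direction, ⟪c₀ - a, v⟫ = 0 := by
  intro v hv
  rcases eq_or_ne v 0 with rfl | hv0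
  · simp
  have hvpos : (0 : ℝ) < ‖v‖ := norm_pos_iff.mpr hv0
  set t : ℝ := r₀ / ‖v‖ with ht
  have htpos : 0 < t := div_pos hr₀ hvpos
  have hmemV : ∀ s : ℝ, c₀ + s • v ∈ V := by
    intro s
    have := AffineSubspace.vadd_mem_of_mem_direction (V.direction.smul_mem s hv) hc₀
    simpa [vadd_eq_add, add_comm] using this
  have hnorm : ∀ s : ℝ, |s| = t → ‖s • v‖ = r₀ := by
    intro s hs
    rw [norm_smul, Real.norm_eq_abs, hs, ht]
    field_simp
  have hmem : ∀ s : ℝ, |s| = t → c₀ + s • v ∈ (V : Set E) ∩ Metric.sphere c₀ r₀ := by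
    intro s hs
    refine ⟨hmemV s, ?_⟩
    simp [Metric.mem_sphere, dist_eq_norm, add_sub_cancel_left, hnorm s hs]
  have habs : |t| = t := abs_of_pos htpos
  have habs' : |(-t)| = t := by rw [abs_neg]; exact habs
  have key : ∀ s : ℝ, |s| = t → ‖c₀ - a‖ ^ 2 + 2 * (s * ⟪c₀ - a, v⟫) + r₀ ^ 2 = ra ^ 2 := by
    intro s hs
    have hd : dist (c₀ + s • v) a = ra := hsub (hmem s hs)
    rw [dist_eq_norm] at hd
    have hrw : c₀ + s • v - a = (c₀ - a) + s • v := by abel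
    rw [hrw] at hd
    have := norm_add_sq_real (c₀ - a) (s • v)
    rw [hd, real_inner_smul_right, hnorm s hs] at this
    linarith
  have h1 := key t habs
  have h2 := key (-t) habs'
  have hz : t * ⟪c₀ - a, v⟫ = 0 := by nlinarith
  rcases mul_eq_zero.mp hz with h | h
  · exact absurd h (ne_of_gt htpos)
  · exact h

private lemma sphere_inter_nonempty {c₀ : E} {r₀ : ℝ} (hr₀ : 0 < r₀)
    {V : AffineSubspace ℝ E} (hc₀ : c₀ ∈ V) (hdim : 1 ≤ finrank ℝ V.direction) :
    ∃ x, x ∈ (V : Set E) ∩ Metric.sphere c₀ r₀ := by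
  have hne : V.direction ≠ ⊥ := by
    intro h
    rw [h] at hdim
    simp at hdim
  obtain ⟨v, hv, hv0⟩ := (Submodule.ne_bot_iff _).mp hne
  have hvpos : (0 : ℝ) < ‖v‖ := norm_pos_iff.mpr hv0
  refine ⟨c₀ + (r₀ / ‖v‖) • v, ?_, ?_⟩
  · have := AffineSubspace.vadd_mem_of_mem_direction (V.direction.smul_mem (r₀ / ‖v‖) hv) hc₀
    simpa [vadd_eq_add, add_comm] using this
  · simp only [Metric.mem_sphere, dist_eq_norm, add_sub_cancel_left, norm_smul,
      Real.norm_eq_abs, abs_of_pos (div_pos hr₀ hvpos)]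
    field_simp

private lemma key_const {ι : Type} (c : ι → E) (r : ι → ℝ) (P : Finset ι) {p0 : ι}
    (hp0 : p0 ∈ P) (m : ι) (hm : c m ∈ affineSpan ℝ (c '' (P : Set ι)))
    {x y : E} (hx : ∀ p ∈ P, dist x (c p) = r p) (hy : ∀ p ∈ P, dist y (c p) = r p) :
    dist x (c m) = dist y (c m) := by
  have hxy : ∀ p ∈ P, 2 * (⟪x, c p⟫ - ⟪y, c p⟫) = ‖x‖ ^ 2 - ‖y‖ ^ 2 := by
    intro p hp
    have h1 := sphere_expand (hx p hp)
    have h2 := sphere_expand (hy p hp)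
    linarith
  have hspanle : vectorSpan ℝ (c '' (P : Set ι)) ≤ (ℝ ∙ (x - y))ᗮ := by
    rw [vectorSpan_def, Submodule.span_le]
    rintro u hu
    rw [Set.mem_vsub] at hu
    obtain ⟨aa, ha, bb, hb, rfl⟩ := hu
    obtain ⟨p, hp, rfl⟩ := ha
    obtain ⟨q, hq, rfl⟩ := hb
    rw [SetLike.mem_coe, Submodule.mem_orthogonal_singleton_iff_inner_right]
    rw [vsub_eq_sub, inner_sub_right, inner_sub_left, inner_sub_left]
    have h1 := hxy p hp
    have h2 := hxy q hq
    linarith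
  have hmem : c m - c p0 ∈ vectorSpan ℝ (c '' (P : Set ι)) := by
    have h0 : c p0 ∈ affineSpan ℝ (c '' (P : Set ι)) :=
      subset_affineSpan ℝ _ ⟨p0, hp0, rfl⟩
    have := AffineSubspace.vsub_mem_direction hm h0
    rwa [direction_affineSpan, vsub_eq_sub] at this
  have hinner : ⟪x - y, c m - c p0⟫ = 0 :=
    Submodule.mem_orthogonal_singleton_iff_inner_right.mp (hspanle hmem)
  rw [inner_sub_right, inner_sub_left, inner_sub_left] at hinner
  have hsq : dist x (c m) ^ 2 = dist y (c m) ^ 2 := by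
    have h1 := sphere_expand (rfl : dist x (c m) = dist x (c m))
    have h2 := sphere_expand (rfl : dist y (c m) = dist y (c m))
    have h3 := hxy p0 hp0
    linarith
  exact (sq_eq_sq₀ dist_nonneg dist_nonneg).mp hsq

end helpers

theorem helly_type_for_spheres (n k : ℕ) (hn : 2 ≤ n) (hk : k + 1 ≤ n)
    (ι : Type) [Fintype ι] (c : ι → EuclideanSpace ℝ (Fin n)) (r : ι → ℝ)
    (hr : ∀ i, 0 < r i) (hcard : n - k ≤ Fintype.card ι)
    (hJ : ∀ J : Finset ι, J.card = n - k →
      IsSphereOfDimGE (k + 1) (⋂ j ∈ J, Metric.sphere (c j) (r j))) :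
    IsSphereOfDimGE (k + 1) (⋂ i, Metric.sphere (c i) (r i)) := by
  classical
  have hE : finrank ℝ (EuclideanSpace ℝ (Fin n)) = n := finrank_euclideanSpace_fin
  rcases lt_or_ge n (k + 2) with hkn | hkn
  · -- degenerate case: k + 2 > n, hypotheses are contradictory
    exfalso
    obtain ⟨J, -, hJc⟩ := Finset.exists_subset_card_eq (s := (Finset.univ : Finset ι)) (n := n - k)
      (by simpa using hcard)
    obtain ⟨c₀, r₀, V, hr₀, hc₀, hdimV, -⟩ := hJ J hJc
    have hle := Submodule.finrank_le V.direction
    rw [hE] at hle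
    omega
  -- main case
  have hιne : Nonempty ι := by
    rw [← Fintype.card_pos_iff]; omega
  -- Step A: dimension bound for every (n-k)-subset of centers
  have hA : ∀ J : Finset ι, J.card = n - k →
      finrank ℝ (vectorSpan ℝ (c '' (J : Set ι))) + (k + 2) ≤ n := by
    intro J hJc
    obtain ⟨c₀, r₀, V, hr₀, hc₀, hdimV, hSet⟩ := hJ J hJc
    have horth : ∀ j ∈ J, ∀ v ∈ V.direction, ⟪c₀ - c j, v⟫ = 0 := by
      intro j hj
      apply ortho_of_subset_sphere hr₀ hc₀
      rw [← hSet]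
      intro x hx
      rw [Set.mem_iInter₂] at hx
      exact hx j hj
    have hle : vectorSpan ℝ (c '' (J : Set ι)) ≤ V.directionᗮ := by
      rw [vectorSpan_def, Submodule.span_le]
      rintro u hu
      rw [Set.mem_vsub] at hu
      obtain ⟨aa, ha, bb, hb, rfl⟩ := hu
      obtain ⟨p, hp, rfl⟩ := ha
      obtain ⟨q, hq, rfl⟩ := hb
      rw [SetLike.mem_coe, Submodule.mem_orthogonal]
      intro v hv
      have h1 := horth p hp v hv
      have h2 := horth q hq v hv
      have e : c p -ᵥ c q = (c₀ - c q) - (c₀ - c p) := by rw [vsub_eq_sub]; abel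
      rw [e, real_inner_comm, inner_sub_left, h1, h2, sub_zero]
    have hmono : finrank ℝ (vectorSpan ℝ (c '' (J : Set ι))) ≤ finrank ℝ V.directionᗮ :=
      Submodule.finrank_mono hle
    have hsum := V.direction.finrank_add_finrank_orthogonal
    omega
  -- choose an affinely independent spanning subset of the centers
  obtain ⟨s, hs_sub, hs_span, hs_ind⟩ :=
    exists_affineIndependent ℝ (EuclideanSpace ℝ (Fin n)) (Set.range c)
  have hsfin : s.Finite := finite_set_of_fin_dim_affineIndependent ℝ hs_ind
  let f : EuclideanSpace ℝ (Fin n) → ι := fun p =>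
    if h : ∃ i, c i = p then h.choose else Classical.arbitrary ι
  have hf : ∀ p ∈ s, c (f p) = p := by
    intro p hp
    have h : ∃ i, c i = p := hs_sub hp
    simp only [f, dif_pos h]
    exact h.choose_spec
  set P : Finset ι := hsfin.toFinset.image f with hPdef
  have hsP : s ⊆ c '' (P : Set ι) := by
    intro p hp
    exact ⟨f p, by
      simp only [P, Finset.coe_image, Set.mem_image]
      exact ⟨p, by rw [Set.Finite.coe_toFinset]; exact hp, rfl⟩, hf p hp⟩
  have hspan : ∀ i : ι, c i ∈ affineSpan ℝ (c '' (P : Set ι)) := by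
    intro i
    have h1 : c i ∈ affineSpan ℝ (Set.range c) := subset_affineSpan ℝ _ (Set.mem_range_self i)
    rw [← hs_span] at h1
    exact affineSpan_mono ℝ hsP h1
  -- card bound on the spanning set
  have hcard_s : hsfin.toFinset.card + 1 ≤ n - k := by
    by_contra hcon
    push_neg at hcon
    have hle : n - k ≤ hsfin.toFinset.card := by omega
    obtain ⟨s', hs'sub, hs'card⟩ := Finset.exists_subset_card_eq (s := hsfin.toFinset) (n := n - k) hle
    have hs'set : (s' : Set (EuclideanSpace ℝ (Fin n))) ⊆ s := by
      intro p hp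
      rw [← Set.Finite.mem_toFinset hsfin]
      exact hs'sub hp
    have hs'ind : AffineIndependent ℝ
        ((↑) : (↑s' : Set (EuclideanSpace ℝ (Fin n))) → EuclideanSpace ℝ (Fin n)) :=
      hs_ind.mono hs'set
    have hfr : finrank ℝ (vectorSpan ℝ ((s' : Set (EuclideanSpace ℝ (Fin n))))) = n - k - 1 := by
      have := hs'ind.finrank_vectorSpan (n := n - k - 1)
        (by simp only [Finset.coe_sort_coe, Fintype.card_coe, hs'card]; omega)
      rwa [Subtype.range_coe] at this
    have hP'card : (s'.image f).card ≤ n - k :=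
      le_trans Finset.card_image_le (le_of_eq hs'card)
    obtain ⟨J, hPJ, hJcard⟩ := Finset.exists_superset_card_eq hP'card hcard
    have h1 : (s' : Set (EuclideanSpace ℝ (Fin n))) ⊆ c '' (J : Set ι) := by
      intro p hp
      refine ⟨f p, ?_, hf p (hs'set hp)⟩
      have : f p ∈ s'.image f := Finset.mem_image_of_mem f hp
      exact hPJ this
    have h2 : finrank ℝ (vectorSpan ℝ ((s' : Set (EuclideanSpace ℝ (Fin n))))) ≤
        finrank ℝ (vectorSpan ℝ (c '' (J : Set ι))) :=
      Submodule.finrank_mono (vectorSpan_mono ℝ h1)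
    have h3 := hA J hJcard
    omega
  have hPcard : P.card + 1 ≤ n - k :=
    le_trans (Nat.add_le_add_right Finset.card_image_le 1) hcard_s
  -- P is nonempty
  obtain ⟨p0, hp0⟩ : ∃ p0, p0 ∈ P := by
    by_contra h
    push_neg at h
    have hPe : (P : Set ι) = ∅ := by
      simp only [Set.eq_empty_iff_forall_notMem]
      intro i hi
      exact h i hi
    have := hspan (Classical.arbitrary ι)
    rw [hPe, Set.image_empty, AffineSubspace.span_empty] at this
    simpa [AffineSubspace.notMem_bot] using this
  -- witness points
  have hwit : ∀ m : ι, ∃ x, (∀ p ∈ P, dist x (c p) = r p) ∧ dist x (c m) = r m := by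
    intro m
    have hins : (insert m P).card ≤ n - k :=
      le_trans (Finset.card_insert_le m P) hPcard
    obtain ⟨J, hPJ, hJcard⟩ := Finset.exists_superset_card_eq hins hcard
    obtain ⟨c₀, r₀, V, hr₀, hc₀, hdimV, hSet⟩ := hJ J hJcard
    obtain ⟨x, hxV, hxs⟩ := sphere_inter_nonempty hr₀ hc₀ (by omega)
    have hx : x ∈ ⋂ j ∈ J, Metric.sphere (c j) (r j) := by
      rw [hSet]; exact ⟨hxV, hxs⟩
    rw [Set.mem_iInter₂] at hx
    exact ⟨x, fun p hp => hx p (hPJ (Finset.mem_insert_of_mem hp)),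
      hx m (hPJ (Finset.mem_insert_self m P))⟩
  -- the intersection equals the intersection over a single (n-k)-subset
  obtain ⟨J, hPJ, hJcard⟩ := Finset.exists_superset_card_eq (le_trans (Nat.le_succ _) hPcard) hcard
  have hEq : (⋂ i, Metric.sphere (c i) (r i)) = ⋂ j ∈ J, Metric.sphere (c j) (r j) := by
    apply Set.Subset.antisymm
    · intro x hx
      rw [Set.mem_iInter] at hx
      exact Set.mem_iInter₂.mpr fun j _ => hx j
    · intro x hx
      rw [Set.mem_iInter₂] at hx
      rw [Set.mem_iInter]
      intro m
      obtain ⟨xm, hxmP, hxmm⟩ := hwit m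
      have hxP : ∀ p ∈ P, dist x (c p) = r p := fun p hp => hx p (hPJ hp)
      have hdd := key_const c r P hp0 m (hspan m) hxP hxmP
      rw [Metric.mem_sphere, hdd, hxmm]
  rw [hEq]
  exact hJ J hJcard
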